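/- Let d ≥ 1 and let I ⊂ ℤ^d∖{0} be a finite set of the form I = I₁ ∪ I₂, where I₁ and I₂ are nonempty and every vector of I₁ is orthogonal to every vector of I₂. Then for any m₁ ∈ I₁ and m₂ ∈ I₂ and every g ∈ H_∞(I), ∫_{[0,2π]^d} g(x) cos⟨x, m₁+m₂⟩ dx = 0; in particular H_∞(I) is not uniformly dense in the continuous (2πℤ^d)-periodic functions ℝ^d → ℝ. -/

import Mathlib

open Real MeasureTheory

/-- ⟨x, m⟩ = ∑ x_j m_j for x ∈ ℝ^d, m ∈ ℤ^d. -/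
noncomputable def ip (d : ℕ) (x : Fin d → ℝ) (m : Fin d → ℤ) : ℝ :=
  ∑ j, x j * (m j : ℝ)

/-- Integer inner product on ℤ^d. -/
def ipZ (d : ℕ) (m l : Fin d → ℤ) : ℤ := ∑ j, m j * l j

/-- c_m(x) = cos⟨x,m⟩. -/
noncomputable def cmap (d : ℕ) (m : Fin d → ℤ) : (Fin d → ℝ) → ℝ :=
  fun x => Real.cos (ip d x m)

/-- s_m(x) = sin⟨x,m⟩. -/
noncomputable def smap (d : ℕ) (m : Fin d → ℤ) : (Fin d → ℝ) → ℝ :=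
  fun x => Real.sin (ip d x m)

/-- B(φ)(x) = ∑_j (∂_{x_j} φ(x))². -/
noncomputable def Bop (d : ℕ) (φ : (Fin d → ℝ) → ℝ) : (Fin d → ℝ) → ℝ :=
  fun x => ∑ j, (fderiv ℝ φ x (Pi.single j 1)) ^ 2

/-- Functions representable as θ₀ − ∑_{j=1}^n B(θ_j) with θ's in H, n ≥ 1. -/
noncomputable def BRep (d : ℕ) (H : Set ((Fin d → ℝ) → ℝ)) : Set ((Fin d → ℝ) → ℝ) :=
  { f | ∃ n : ℕ, 1 ≤ n ∧ ∃ θ₀ ∈ H, ∃ θ : Fin n → (Fin d → ℝ) → ℝ,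
      (∀ j, θ j ∈ H) ∧ f = θ₀ - ∑ j, Bop d (θ j) }

/-- F(H): f such that both f and −f are representable. -/
noncomputable def Fop (d : ℕ) (H : Set ((Fin d → ℝ) → ℝ)) : Set ((Fin d → ℝ) → ℝ) :=
  { f | f ∈ BRep d H ∧ -f ∈ BRep d H }

/-- H(I): span of {1} ∪ {c_k, s_k : k ∈ I}. -/
noncomputable def H0 (d : ℕ) (I : Finset (Fin d → ℤ)) : Set ((Fin d → ℝ) → ℝ) :=
  ↑(Submodule.span ℝ
      ({fun _ => (1:ℝ)} ∪ ⋃ k ∈ (I : Set (Fin d → ℤ)), {cmap d k, smap d k}))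

noncomputable def HSeq (d : ℕ) (I : Finset (Fin d → ℤ)) : ℕ → Set ((Fin d → ℝ) → ℝ)
  | 0 => H0 d I
  | j + 1 => Fop d (HSeq d I j)

/-- H_∞(I) = ⋃_j H_j(I). -/
noncomputable def Hinf (d : ℕ) (I : Finset (Fin d → ℤ)) : Set ((Fin d → ℝ) → ℝ) :=
  ⋃ j, HSeq d I j

/-- I generates ℤ^d over ℤ. -/
def IsGenerator (d : ℕ) (I : Finset (Fin d → ℤ)) : Prop :=
  ∀ n : Fin d → ℤ, ∃ a : (Fin d → ℤ) → ℤ, n = ∑ k ∈ I, a k • k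

/-- Connectedness condition of Proposition 2.5. -/
def ConnectedSet (d : ℕ) (I : Finset (Fin d → ℤ)) : Prop :=
  ∀ l ∈ I, ∀ m ∈ I, ∃ k : ℕ, ∃ n : Fin (k + 1) → (Fin d → ℤ),
    (∀ j, n j ∈ I) ∧ ipZ d l (n 0) ≠ 0 ∧
    (∀ j : Fin k, ipZ d (n j.castSucc) (n j.succ) ≠ 0) ∧
    ipZ d (n (Fin.last k)) m ≠ 0

/-- (2πℤ^d)-periodicity for real-valued functions. -/
def Periodic2pi (d : ℕ) (f : (Fin d → ℝ) → ℝ) : Prop :=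
  ∀ (x : Fin d → ℝ) (k : Fin d → ℤ), f (x + fun j => 2 * Real.pi * (k j : ℝ)) = f x
noncomputable def Lk (d : ℕ) (k : Fin d → ℤ) : (Fin d → ℝ) →L[ℝ] ℝ :=
  ∑ j, (k j : ℝ) • (ContinuousLinearMap.proj j : (Fin d → ℝ) →L[ℝ] ℝ)

lemma Lk_apply (d : ℕ) (k : Fin d → ℤ) (v : Fin d → ℝ) :
    Lk d k v = ∑ j, (k j : ℝ) * v j := by
  simp [Lk, ContinuousLinearMap.sum_apply, mul_comm]

lemma Lk_single (d : ℕ) (k : Fin d → ℤ) (j : Fin d) :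
    Lk d k (Pi.single j 1) = (k j : ℝ) := by
  rw [Lk_apply]
  rw [Finset.sum_eq_single j]
  · simp
  · intro i _ hij; simp [Pi.single_apply, hij]
  · simp

lemma hasFDerivAt_ip (d : ℕ) (k : Fin d → ℤ) (x : Fin d → ℝ) :
    HasFDerivAt (fun x => ip d x k) (Lk d k) x := by
  have : (fun x : Fin d → ℝ => ip d x k) = fun x => Lk d k x := by
    funext x; rw [Lk_apply]; simp [ip, mul_comm]
  rw [this]
  exact (Lk d k).hasFDerivAt

lemma hasFDerivAt_cmap (d : ℕ) (k : Fin d → ℤ) (x : Fin d → ℝ) :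
    HasFDerivAt (cmap d k) ((-Real.sin (ip d x k)) • Lk d k) x :=
  (hasFDerivAt_ip d k x).cos

lemma hasFDerivAt_smap (d : ℕ) (k : Fin d → ℤ) (x : Fin d → ℝ) :
    HasFDerivAt (smap d k) ((Real.cos (ip d x k)) • Lk d k) x :=
  (hasFDerivAt_ip d k x).sin

lemma fderiv_cmap (d : ℕ) (k : Fin d → ℤ) (x : Fin d → ℝ) (j : Fin d) :
    fderiv ℝ (cmap d k) x (Pi.single j 1) = -Real.sin (ip d x k) * (k j : ℝ) := by
  rw [(hasFDerivAt_cmap d k x).fderiv]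
  simp [Lk_single]

lemma fderiv_smap (d : ℕ) (k : Fin d → ℤ) (x : Fin d → ℝ) (j : Fin d) :
    fderiv ℝ (smap d k) x (Pi.single j 1) = Real.cos (ip d x k) * (k j : ℝ) := by
  rw [(hasFDerivAt_smap d k x).fderiv]
  simp [Lk_single]

lemma ip_add (d : ℕ) (x : Fin d → ℝ) (k l : Fin d → ℤ) :
    ip d x (k + l) = ip d x k + ip d x l := by
  simp [ip, mul_add, Finset.sum_add_distrib]

lemma ip_sub (d : ℕ) (x : Fin d → ℝ) (k l : Fin d → ℤ) :
    ip d x (k - l) = ip d x k - ip d x l := by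
  simp only [ip, Pi.sub_apply, Int.cast_sub, mul_sub]
  rw [Finset.sum_sub_distrib]

noncomputable def Tset (d : ℕ) (M : Set (Fin d → ℤ)) : Submodule ℝ ((Fin d → ℝ) → ℝ) :=
  Submodule.span ℝ ((cmap d '' M) ∪ (smap d '' M))

lemma diff_of_mem_T {d : ℕ} {M : Set (Fin d → ℤ)} {θ : (Fin d → ℝ) → ℝ}
    (hθ : θ ∈ Tset d M) : Differentiable ℝ θ := by
  induction hθ using Submodule.span_induction with
  | mem x h =>
    rcases h with ⟨k, _, rfl⟩ | ⟨k, _, rfl⟩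
    · exact fun x => (hasFDerivAt_cmap d k x).differentiableAt
    · exact fun x => (hasFDerivAt_smap d k x).differentiableAt
  | zero => exact differentiable_const 0
  | add x y hx hy ihx ihy => exact ihx.add ihy
  | smul a x hx ihx => exact ihx.const_smul a

noncomputable def Cross (d : ℕ) (θ θ' : (Fin d → ℝ) → ℝ) : (Fin d → ℝ) → ℝ :=
  fun x => ∑ j, (fderiv ℝ θ x (Pi.single j 1)) * (fderiv ℝ θ' x (Pi.single j 1))

lemma Bop_eq_cross (d : ℕ) (θ : (Fin d → ℝ) → ℝ) : Bop d θ = Cross d θ θ := by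
  funext x; simp [Bop, Cross, sq]

lemma ipZ_cast (d : ℕ) (k l : Fin d → ℤ) :
    ((ipZ d k l : ℤ) : ℝ) = ∑ j, (k j : ℝ) * (l j : ℝ) := by
  push_cast [ipZ]; rfl

lemma cross_cc (d : ℕ) (k l : Fin d → ℤ) (x : Fin d → ℝ) :
    Cross d (cmap d k) (cmap d l) x
      = (ipZ d k l : ℝ) * (Real.sin (ip d x k) * Real.sin (ip d x l)) := by
  simp only [Cross, fderiv_cmap]
  rw [ipZ_cast, Finset.sum_mul]
  apply Finset.sum_congr rfl; intros; ring

lemma cross_cs (d : ℕ) (k l : Fin d → ℤ) (x : Fin d → ℝ) :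
    Cross d (cmap d k) (smap d l) x
      = -((ipZ d k l : ℝ) * (Real.sin (ip d x k) * Real.cos (ip d x l))) := by
  simp only [Cross, fderiv_cmap, fderiv_smap]
  rw [ipZ_cast, Finset.sum_mul, ← Finset.sum_neg_distrib]
  apply Finset.sum_congr rfl; intros; ring

lemma cross_ss (d : ℕ) (k l : Fin d → ℤ) (x : Fin d → ℝ) :
    Cross d (smap d k) (smap d l) x
      = (ipZ d k l : ℝ) * (Real.cos (ip d x k) * Real.cos (ip d x l)) := by
  simp only [Cross, fderiv_smap]
  rw [ipZ_cast, Finset.sum_mul]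
  apply Finset.sum_congr rfl; intros; ring

lemma cross_comm (d : ℕ) (f g : (Fin d → ℝ) → ℝ) : Cross d f g = Cross d g f := by
  funext x; simp only [Cross]; apply Finset.sum_congr rfl; intros; ring

lemma cmap_mem {d : ℕ} {M : Set (Fin d → ℤ)} {k : Fin d → ℤ} (hk : k ∈ M) :
    cmap d k ∈ Tset d M :=
  Submodule.subset_span (Or.inl ⟨k, hk, rfl⟩)

lemma smap_mem {d : ℕ} {M : Set (Fin d → ℤ)} {k : Fin d → ℤ} (hk : k ∈ M) :
    smap d k ∈ Tset d M :=
  Submodule.subset_span (Or.inr ⟨k, hk, rfl⟩)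

lemma ipZ_comm (d : ℕ) (k l : Fin d → ℤ) : ipZ d k l = ipZ d l k := by
  unfold ipZ; apply Finset.sum_congr rfl; intros; ring

lemma cross_gen_mem {d : ℕ} {M : Set (Fin d → ℤ)}
    (hM : ∀ k ∈ M, ∀ l ∈ M, ipZ d k l ≠ 0 → (k + l ∈ M ∧ k - l ∈ M))
    {k l : Fin d → ℤ} (hk : k ∈ M) (hl : l ∈ M)
    (f g : (Fin d → ℝ) → ℝ)
    (hf : f = cmap d k ∨ f = smap d k) (hg : g = cmap d l ∨ g = smap d l) :
    Cross d f g ∈ Tset d M := by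
  by_cases h0 : ipZ d k l = 0
  · have : Cross d f g = 0 := by
      funext x
      rcases hf with rfl | rfl <;> rcases hg with rfl | rfl <;>
        simp [cross_cc, cross_cs, cross_ss, cross_comm d (smap d k) (cmap d l), h0,
          ipZ_comm d l k ▸ h0]
    rw [this]; exact Submodule.zero_mem _
  · obtain ⟨hadd, hsub⟩ := hM k hk l hl h0
    rcases hf with rfl | rfl <;> rcases hg with rfl | rfl
    · have : Cross d (cmap d k) (cmap d l)
          = ((ipZ d k l : ℝ)/2) • cmap d (k - l) - ((ipZ d k l : ℝ)/2) • cmap d (k + l) := by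
        funext x
        simp only [cross_cc, Pi.sub_apply, Pi.smul_apply, smul_eq_mul, cmap,
          ip_sub, ip_add, Real.cos_sub, Real.cos_add]
        ring
      rw [this]
      exact Submodule.sub_mem _ (Submodule.smul_mem _ _ (cmap_mem hsub))
        (Submodule.smul_mem _ _ (cmap_mem hadd))
    · have : Cross d (cmap d k) (smap d l)
          = (-(ipZ d k l : ℝ)/2) • smap d (k - l) + (-(ipZ d k l : ℝ)/2) • smap d (k + l) := by
        funext x
        simp only [cross_cs, Pi.add_apply, Pi.smul_apply, smul_eq_mul, smap,
          ip_sub, ip_add, Real.sin_sub, Real.sin_add]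
        ring
      rw [this]
      exact Submodule.add_mem _ (Submodule.smul_mem _ _ (smap_mem hsub))
        (Submodule.smul_mem _ _ (smap_mem hadd))
    · have : Cross d (smap d k) (cmap d l)
          = ((ipZ d k l : ℝ)/2) • smap d (k - l) - ((ipZ d k l : ℝ)/2) • smap d (k + l) := by
        funext x
        rw [cross_comm]
        simp only [cross_cs, Pi.sub_apply, Pi.smul_apply, smul_eq_mul, smap,
          ip_sub, ip_add, Real.sin_sub, Real.sin_add, ipZ]
        rw [show ∑ j, l j * k j = ∑ j, k j * l j from
          Finset.sum_congr rfl fun j _ => mul_comm _ _]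
        ring
      rw [this]
      exact Submodule.sub_mem _ (Submodule.smul_mem _ _ (smap_mem hsub))
        (Submodule.smul_mem _ _ (smap_mem hadd))
    · have : Cross d (smap d k) (smap d l)
          = ((ipZ d k l : ℝ)/2) • cmap d (k - l) + ((ipZ d k l : ℝ)/2) • cmap d (k + l) := by
        funext x
        simp only [cross_ss, Pi.add_apply, Pi.smul_apply, smul_eq_mul, cmap,
          ip_sub, ip_add, Real.cos_sub, Real.cos_add]
        ring
      rw [this]
      exact Submodule.add_mem _ (Submodule.smul_mem _ _ (cmap_mem hsub))
        (Submodule.smul_mem _ _ (cmap_mem hadd))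

lemma cross_zero_right (d : ℕ) (f : (Fin d → ℝ) → ℝ) : Cross d f 0 = 0 := by
  funext x
  simp [Cross, show (0 : (Fin d → ℝ) → ℝ) = fun _ => (0:ℝ) from rfl]

lemma cross_add_right (d : ℕ) (f g₁ g₂ : (Fin d → ℝ) → ℝ)
    (h₁ : Differentiable ℝ g₁) (h₂ : Differentiable ℝ g₂) :
    Cross d f (g₁ + g₂) = Cross d f g₁ + Cross d f g₂ := by
  funext x
  simp only [Cross, Pi.add_apply]
  rw [fderiv_add (h₁ x) (h₂ x), ← Finset.sum_add_distrib]
  apply Finset.sum_congr rfl; intros; simp; ring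

lemma cross_smul_right (d : ℕ) (a : ℝ) (f g : (Fin d → ℝ) → ℝ)
    (h : Differentiable ℝ g) :
    Cross d f (a • g) = a • Cross d f g := by
  funext x
  simp only [Cross, Pi.smul_apply, smul_eq_mul]
  rw [fderiv_const_smul (h x) a, Finset.mul_sum]
  apply Finset.sum_congr rfl; intros; simp; ring

lemma cross_mem_T {d : ℕ} {M : Set (Fin d → ℤ)}
    (hM : ∀ k ∈ M, ∀ l ∈ M, ipZ d k l ≠ 0 → (k + l ∈ M ∧ k - l ∈ M))
    {θ : (Fin d → ℝ) → ℝ} (hθ : θ ∈ Tset d M)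
    {θ' : (Fin d → ℝ) → ℝ} (hθ' : θ' ∈ Tset d M) :
    Cross d θ θ' ∈ Tset d M := by
  induction hθ using Submodule.span_induction with
  | mem f hf =>
    induction hθ' using Submodule.span_induction with
    | mem g hg =>
      rcases hf with ⟨k, hk, rfl⟩ | ⟨k, hk, rfl⟩ <;>
        rcases hg with ⟨l, hl, rfl⟩ | ⟨l, hl, rfl⟩
      · exact cross_gen_mem hM hk hl _ _ (Or.inl rfl) (Or.inl rfl)
      · exact cross_gen_mem hM hk hl _ _ (Or.inl rfl) (Or.inr rfl)
      · exact cross_gen_mem hM hk hl _ _ (Or.inr rfl) (Or.inl rfl)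
      · exact cross_gen_mem hM hk hl _ _ (Or.inr rfl) (Or.inr rfl)
    | zero => rw [cross_zero_right]; exact Submodule.zero_mem _
    | add g₁ g₂ hg₁ hg₂ ih₁ ih₂ =>
      rw [cross_add_right d _ _ _ (diff_of_mem_T hg₁) (diff_of_mem_T hg₂)]
      exact Submodule.add_mem _ ih₁ ih₂
    | smul a g hg ih =>
      rw [cross_smul_right d a _ _ (diff_of_mem_T hg)]
      exact Submodule.smul_mem _ _ ih
  | zero => rw [cross_comm, cross_zero_right]; exact Submodule.zero_mem _
  | add f₁ f₂ hf₁ hf₂ ih₁ ih₂ =>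
    rw [cross_comm, cross_add_right d _ _ _ (diff_of_mem_T hf₁) (diff_of_mem_T hf₂)]
    rw [show Cross d θ' f₁ = Cross d f₁ θ' from cross_comm .., show Cross d θ' f₂ = Cross d f₂ θ' from cross_comm ..]
    exact Submodule.add_mem _ ih₁ ih₂
  | smul a f hf ih =>
    rw [cross_comm, cross_smul_right d a _ _ (diff_of_mem_T hf), cross_comm d θ' f]
    exact Submodule.smul_mem _ _ ih

lemma one_eq_cmap_zero (d : ℕ) : (fun _ : Fin d → ℝ => (1:ℝ)) = cmap d 0 := by
  funext x; simp [cmap, ip]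

lemma H0_subset_T {d : ℕ} {I : Finset (Fin d → ℤ)} {M : Set (Fin d → ℤ)}
    (h0 : (0 : Fin d → ℤ) ∈ M) (hIM : ∀ k ∈ I, k ∈ M) :
    H0 d I ⊆ (Tset d M : Set ((Fin d → ℝ) → ℝ)) := by
  have : Submodule.span ℝ
      ({fun _ => (1:ℝ)} ∪ ⋃ k ∈ (I : Set (Fin d → ℤ)), {cmap d k, smap d k}) ≤ Tset d M := by
    rw [Submodule.span_le]
    rintro f (rfl | hf)
    · rw [one_eq_cmap_zero]; exact cmap_mem h0
    · simp only [Set.mem_iUnion] at hf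
      obtain ⟨k, hk, hf⟩ := hf
      rcases hf with rfl | hf
      · exact cmap_mem (hIM k hk)
      · rw [Set.mem_singleton_iff] at hf; subst hf; exact smap_mem (hIM k hk)
  exact this

lemma BRep_subset_T {d : ℕ} {M : Set (Fin d → ℤ)}
    (hM : ∀ k ∈ M, ∀ l ∈ M, ipZ d k l ≠ 0 → (k + l ∈ M ∧ k - l ∈ M))
    {H : Set ((Fin d → ℝ) → ℝ)} (hH : H ⊆ (Tset d M : Set ((Fin d → ℝ) → ℝ))) :
    BRep d H ⊆ (Tset d M : Set ((Fin d → ℝ) → ℝ)) := by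
  rintro f ⟨n, hn, θ₀, hθ₀, θ, hθ, rfl⟩
  refine Submodule.sub_mem _ (hH hθ₀) (Submodule.sum_mem _ fun j _ => ?_)
  rw [Bop_eq_cross]
  exact cross_mem_T hM (hH (hθ j)) (hH (hθ j))

lemma Hinf_subset_T {d : ℕ} {I : Finset (Fin d → ℤ)} {M : Set (Fin d → ℤ)}
    (hM : ∀ k ∈ M, ∀ l ∈ M, ipZ d k l ≠ 0 → (k + l ∈ M ∧ k - l ∈ M))
    (h0 : (0 : Fin d → ℤ) ∈ M) (hIM : ∀ k ∈ I, k ∈ M) :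
    Hinf d I ⊆ (Tset d M : Set ((Fin d → ℝ) → ℝ)) := by
  have key : ∀ j, HSeq d I j ⊆ (Tset d M : Set ((Fin d → ℝ) → ℝ)) := by
    intro j
    induction j with
    | zero => exact H0_subset_T h0 hIM
    | succ j ih =>
      intro f hf
      exact BRep_subset_T hM ih hf.1
  rintro f hf
  simp only [Hinf, Set.mem_iUnion] at hf
  obtain ⟨j, hj⟩ := hf
  exact key j hj

lemma int_exp_one_dim (n : ℤ) :
    ∫ t in Set.Icc (0:ℝ) (2*Real.pi), Complex.exp (n * t * Complex.I)
      = if n = 0 then (2*Real.pi : ℂ) else 0 := by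
  rw [MeasureTheory.integral_Icc_eq_integral_Ioc,
    ← intervalIntegral.integral_of_le (by positivity : (0:ℝ) ≤ 2*Real.pi)]
  by_cases hn : n = 0
  · simp [hn]
  · simp only [hn, if_false]
    have hc : (n : ℂ) * Complex.I ≠ 0 := by
      simp [Complex.I_ne_zero, hn]
    have : (fun t : ℝ => Complex.exp (n * t * Complex.I))
        = fun t : ℝ => Complex.exp ((n * Complex.I) * t) := by
      funext t; ring_nf
    rw [this, integral_exp_mul_complex hc]
    have h2 : (n : ℂ) * Complex.I * (2*Real.pi : ℝ) = n * (2 * (Real.pi:ℂ) * Complex.I) := by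
      push_cast; ring
    rw [h2, Complex.exp_int_mul_two_pi_mul_I]
    simp

noncomputable def Box (d : ℕ) : Set (Fin d → ℝ) := Set.Icc 0 (fun _ => 2 * Real.pi)

lemma indicator_box_eq_prod (d : ℕ) (n : Fin d → ℤ) (x : Fin d → ℝ) :
    Set.indicator (Box d) (fun x => Complex.exp ((ip d x n : ℂ) * Complex.I)) x
      = ∏ j, Set.indicator (Set.Icc (0:ℝ) (2*Real.pi))
          (fun t => Complex.exp (n j * t * Complex.I)) (x j) := by
  by_cases hx : x ∈ Box d
  · rw [Set.indicator_of_mem hx]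
    have hxj : ∀ j, x j ∈ Set.Icc (0:ℝ) (2*Real.pi) := by
      intro j
      obtain ⟨h1, h2⟩ := hx
      exact ⟨h1 j, h2 j⟩
    calc Complex.exp ((ip d x n : ℂ) * Complex.I)
        = ∏ j, Complex.exp (n j * x j * Complex.I) := by
          rw [← Complex.exp_sum]
          congr 1
          push_cast [ip, Finset.sum_mul]
          apply Finset.sum_congr rfl; intros; ring
      _ = _ := by
          apply Finset.prod_congr rfl
          intro j _
          rw [Set.indicator_of_mem (hxj j)]
  · rw [Set.indicator_of_notMem hx]
    have : ∃ j, x j ∉ Set.Icc (0:ℝ) (2*Real.pi) := by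
      by_contra h
      push_neg at h
      exact hx ⟨fun j => (h j).1, fun j => (h j).2⟩
    obtain ⟨j, hj⟩ := this
    rw [eq_comm]
    apply Finset.prod_eq_zero (Finset.mem_univ j)
    rw [Set.indicator_of_notMem hj]

lemma int_box_exp (d : ℕ) (n : Fin d → ℤ) :
    ∫ x in Box d, Complex.exp ((ip d x n : ℂ) * Complex.I)
      = ∏ j, (if n j = 0 then (2*Real.pi : ℂ) else 0) := by
  rw [← MeasureTheory.integral_indicator (show MeasurableSet (Box d) from measurableSet_Icc)]
  simp_rw [indicator_box_eq_prod]
  rw [MeasureTheory.volume_pi, MeasureTheory.integral_fintype_prod_eq_prod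
    (fun j t => Set.indicator (Set.Icc (0:ℝ) (2*Real.pi))
      (fun t => Complex.exp (n j * t * Complex.I)) t)]
  apply Finset.prod_congr rfl
  intro j _
  rw [MeasureTheory.integral_indicator measurableSet_Icc]
  exact int_exp_one_dim (n j)

lemma int_box_exp_zero {d : ℕ} {n : Fin d → ℤ} (hn : n ≠ 0) :
    ∫ x in Box d, Complex.exp ((ip d x n : ℂ) * Complex.I) = 0 := by
  rw [int_box_exp]
  have : ∃ j, n j ≠ 0 := by
    by_contra h
    push_neg at h
    exact hn (funext h)
  obtain ⟨j, hj⟩ := this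
  exact Finset.prod_eq_zero (Finset.mem_univ j) (by simp [hj])

lemma integrableOn_box {d : ℕ} {E : Type*} [NormedAddCommGroup E] [NormedSpace ℝ E]
    {f : (Fin d → ℝ) → E} (hf : Continuous f) : IntegrableOn f (Box d) volume :=
  hf.continuousOn.integrableOn_compact isCompact_Icc

lemma continuous_ip (d : ℕ) (n : Fin d → ℤ) : Continuous (fun x => ip d x n) := by
  unfold ip
  exact continuous_finset_sum _ fun j _ => (continuous_apply j).mul continuous_const

lemma int_box_cos_zero {d : ℕ} {n : Fin d → ℤ} (hn : n ≠ 0) :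
    ∫ x in Box d, Real.cos (ip d x n) = 0 := by
  have hint : Integrable (fun x => Complex.exp ((ip d x n : ℂ) * Complex.I))
      (volume.restrict (Box d)) := by
    apply integrableOn_box
    exact Complex.continuous_exp.comp
      ((Complex.continuous_ofReal.comp (continuous_ip d n)).mul continuous_const)
  have h2 := integral_re hint
  rw [int_box_exp_zero hn] at h2
  simpa [RCLike.re_to_complex, Complex.exp_ofReal_mul_I_re] using h2

lemma int_box_sin_zero {d : ℕ} (n : Fin d → ℤ) :
    ∫ x in Box d, Real.sin (ip d x n) = 0 := by
  by_cases hn : n = 0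
  · subst hn; simp [ip]
  · have hint : Integrable (fun x => Complex.exp ((ip d x n : ℂ) * Complex.I))
        (volume.restrict (Box d)) := by
      apply integrableOn_box
      exact Complex.continuous_exp.comp
        ((Complex.continuous_ofReal.comp (continuous_ip d n)).mul continuous_const)
    have h2 := integral_im hint
    rw [int_box_exp_zero hn] at h2
    simpa [RCLike.im_to_complex, Complex.exp_ofReal_mul_I_im] using h2

lemma cont_of_mem_T {d : ℕ} {M : Set (Fin d → ℤ)} {θ : (Fin d → ℝ) → ℝ}
    (hθ : θ ∈ Tset d M) : Continuous θ := (diff_of_mem_T hθ).continuous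

lemma int_cc {d : ℕ} {k m : Fin d → ℤ} (h1 : k - m ≠ 0) (h2 : k + m ≠ 0) :
    ∫ x in Box d, cmap d k x * Real.cos (ip d x m) = 0 := by
  have heq : (fun x => cmap d k x * Real.cos (ip d x m))
      = fun x => (1/2) * Real.cos (ip d x (k - m)) + (1/2) * Real.cos (ip d x (k + m)) := by
    funext x
    simp only [cmap, ip_sub, ip_add, Real.cos_sub, Real.cos_add]
    ring
  rw [heq, MeasureTheory.integral_add]
  · rw [MeasureTheory.integral_const_mul, MeasureTheory.integral_const_mul,
      int_box_cos_zero h1, int_box_cos_zero h2]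
    ring
  · exact integrableOn_box (continuous_const.mul (Real.continuous_cos.comp (continuous_ip d (k - m))))
  · exact integrableOn_box (continuous_const.mul (Real.continuous_cos.comp (continuous_ip d (k + m))))

lemma int_sc {d : ℕ} (k m : Fin d → ℤ) :
    ∫ x in Box d, smap d k x * Real.cos (ip d x m) = 0 := by
  have heq : (fun x => smap d k x * Real.cos (ip d x m))
      = fun x => (1/2) * Real.sin (ip d x (k + m)) + (1/2) * Real.sin (ip d x (k - m)) := by
    funext x
    simp only [smap, ip_sub, ip_add, Real.sin_sub, Real.sin_add]
    ring
  rw [heq, MeasureTheory.integral_add]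
  · rw [MeasureTheory.integral_const_mul, MeasureTheory.integral_const_mul,
      int_box_sin_zero, int_box_sin_zero]
    ring
  · exact integrableOn_box (continuous_const.mul (Real.continuous_sin.comp (continuous_ip d (k + m))))
  · exact integrableOn_box (continuous_const.mul (Real.continuous_sin.comp (continuous_ip d (k - m))))

lemma int_T_cos {d : ℕ} {M : Set (Fin d → ℤ)} {m : Fin d → ℤ}
    (hMneg : ∀ k ∈ M, -k ∈ M) (hm : m ∉ M)
    {g : (Fin d → ℝ) → ℝ} (hg : g ∈ Tset d M) :
    ∫ x in Box d, g x * Real.cos (ip d x m) = 0 := by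
  induction hg using Submodule.span_induction with
  | mem f hf =>
    rcases hf with ⟨k, hk, rfl⟩ | ⟨k, hk, rfl⟩
    · apply int_cc
      · intro h
        exact hm (by rwa [show k = m from by linear_combination (norm := abel) h] at hk)
      · intro h
        have : m = -k := by linear_combination (norm := abel) h
        exact hm (this ▸ hMneg k hk)
    · apply int_sc
  | zero => simp
  | add g₁ g₂ hg₁ hg₂ ih₁ ih₂ =>
    have e : (fun x => (g₁ + g₂) x * Real.cos (ip d x m))
        = fun x => g₁ x * Real.cos (ip d x m) + g₂ x * Real.cos (ip d x m) := by
      funext x; simp [add_mul]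
    rw [e, MeasureTheory.integral_add, ih₁, ih₂]
    · ring
    · exact integrableOn_box ((cont_of_mem_T hg₁).mul (Real.continuous_cos.comp (continuous_ip d m)))
    · exact integrableOn_box ((cont_of_mem_T hg₂).mul (Real.continuous_cos.comp (continuous_ip d m)))
  | smul a g hg ih =>
    have e : (fun x => (a • g) x * Real.cos (ip d x m))
        = fun x => a * (g x * Real.cos (ip d x m)) := by
      funext x; simp [smul_eq_mul]; ring
    rw [e, MeasureTheory.integral_const_mul, ih]
    ring

lemma ipZ_add_left (d : ℕ) (k k' l : Fin d → ℤ) :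
    ipZ d (k + k') l = ipZ d k l + ipZ d k' l := by
  unfold ipZ; rw [← Finset.sum_add_distrib]
  apply Finset.sum_congr rfl; intros; simp [add_mul]

lemma ipZ_neg_left (d : ℕ) (k l : Fin d → ℤ) : ipZ d (-k) l = -ipZ d k l := by
  unfold ipZ; rw [← Finset.sum_neg_distrib]
  apply Finset.sum_congr rfl; intros; simp

lemma ipZ_zero_left (d : ℕ) (l : Fin d → ℤ) : ipZ d 0 l = 0 := by
  simp [ipZ]

lemma ipZ_self_eq_zero {d : ℕ} {n : Fin d → ℤ} (h : ipZ d n n = 0) : n = 0 := by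
  funext j
  have h2 : ∀ i ∈ Finset.univ, (0:ℤ) ≤ n i * n i := fun i _ => mul_self_nonneg _
  have := (Finset.sum_eq_zero_iff_of_nonneg h2).mp h j (Finset.mem_univ j)
  simpa [mul_self_eq_zero] using this

lemma orth_closure {d : ℕ} {I₁ I₂ : Finset (Fin d → ℤ)}
    (horth : ∀ k₁ ∈ I₁, ∀ k₂ ∈ I₂, ipZ d k₁ k₂ = 0) :
    ∀ k ∈ AddSubgroup.closure (I₁ : Set (Fin d → ℤ)),
      ∀ l ∈ AddSubgroup.closure (I₂ : Set (Fin d → ℤ)), ipZ d k l = 0 := by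
  intro k hk
  induction hk using AddSubgroup.closure_induction with
  | mem x hx =>
    intro l hl
    induction hl using AddSubgroup.closure_induction with
    | mem y hy => exact horth x hx y hy
    | zero => rw [ipZ_comm, ipZ_zero_left]
    | add y z hy hz ihy ihz => rw [ipZ_comm, ipZ_add_left, ipZ_comm d y x, ipZ_comm d z x, ihy, ihz]; ring
    | neg y hy ihy => rw [ipZ_comm, ipZ_neg_left, ipZ_comm d y x, ihy]; ring
  | zero => intro l hl; rw [ipZ_zero_left]
  | add x y hx hy ihx ihy => intro l hl; rw [ipZ_add_left, ihx l hl, ihy l hl]; ring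
  | neg x hx ihx => intro l hl; rw [ipZ_neg_left, ihx l hl]; ring

/-- if I = I₁ ∪ I₂ with I₁, I₂ nonempty and mutually orthogonal,
then for any m₁ ∈ I₁, m₂ ∈ I₂, every g ∈ H_∞(I) is orthogonal to
cos⟨·, m₁+m₂⟩ on [0,2π]^d; in particular H_∞(I) is not uniformly dense in the
continuous (2πℤ^d)-periodic functions. -/
theorem stmt13 (d : ℕ) (hd : 1 ≤ d) (I I₁ I₂ : Finset (Fin d → ℤ))
    (hI : ∀ k ∈ I, k ≠ 0)
    (hI1 : I₁.Nonempty) (hI2 : I₂.Nonempty) (hunion : I = I₁ ∪ I₂)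
    (horth : ∀ k₁ ∈ I₁, ∀ k₂ ∈ I₂, ipZ d k₁ k₂ = 0)
    (m₁ : Fin d → ℤ) (hm₁ : m₁ ∈ I₁) (m₂ : Fin d → ℤ) (hm₂ : m₂ ∈ I₂) :
    (∀ g ∈ Hinf d I,
      (∫ x in Set.Icc (0 : Fin d → ℝ) (fun _ => 2 * Real.pi),
        g x * Real.cos (ip d x (m₁ + m₂))) = 0) ∧
    ¬ (∀ f : (Fin d → ℝ) → ℝ, Continuous f → Periodic2pi d f →
        ∀ ε : ℝ, 0 < ε → ∃ g ∈ Hinf d I, ∀ x : Fin d → ℝ, |f x - g x| < ε) := by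
  set m : Fin d → ℤ := m₁ + m₂ with hmdef
  set G₁ := AddSubgroup.closure (I₁ : Set (Fin d → ℤ)) with hG₁
  set G₂ := AddSubgroup.closure (I₂ : Set (Fin d → ℤ)) with hG₂
  set M : Set (Fin d → ℤ) := ↑G₁ ∪ ↑G₂ with hMdef
  have horthG := orth_closure horth
  have hMneg : ∀ k ∈ M, -k ∈ M := by
    rintro k (hk | hk)
    · exact Or.inl (neg_mem hk)
    · exact Or.inr (neg_mem hk)
  have hMadd : ∀ k ∈ M, ∀ l ∈ M, ipZ d k l ≠ 0 → (k + l ∈ M ∧ k - l ∈ M) := by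
    rintro k (hk | hk) l (hl | hl) hne
    · exact ⟨Or.inl (add_mem hk hl), Or.inl (sub_mem hk hl)⟩
    · exact absurd (horthG k hk l hl) hne
    · exact absurd (by rw [ipZ_comm]; exact horthG l hl k hk) hne
    · exact ⟨Or.inr (add_mem hk hl), Or.inr (sub_mem hk hl)⟩
  have h0M : (0 : Fin d → ℤ) ∈ M := Or.inl (zero_mem _)
  have hIM : ∀ k ∈ I, k ∈ M := by
    intro k hk
    rw [hunion] at hk
    rcases Finset.mem_union.mp hk with h | h
    · exact Or.inl (AddSubgroup.subset_closure h)
    · exact Or.inr (AddSubgroup.subset_closure h)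
  have hm₁0 : m₁ ≠ 0 := hI m₁ (hunion ▸ Finset.mem_union_left _ hm₁)
  have hm₂0 : m₂ ≠ 0 := hI m₂ (hunion ▸ Finset.mem_union_right _ hm₂)
  have hm₁G : m₁ ∈ G₁ := AddSubgroup.subset_closure hm₁
  have hm₂G : m₂ ∈ G₂ := AddSubgroup.subset_closure hm₂
  have hmM : m ∉ M := by
    rintro (hmG | hmG)
    · have h2 : m₂ ∈ G₁ := by
        have := sub_mem hmG hm₁G
        rwa [hmdef, add_sub_cancel_left] at this
      exact hm₂0 (ipZ_self_eq_zero (horthG m₂ h2 m₂ hm₂G))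
    · have h1 : m₁ ∈ G₂ := by
        have := sub_mem hmG hm₂G
        rwa [hmdef, add_sub_cancel_right] at this
      exact hm₁0 (ipZ_self_eq_zero (horthG m₁ hm₁G m₁ h1))
  have hsub : Hinf d I ⊆ (Tset d M : Set ((Fin d → ℝ) → ℝ)) :=
    Hinf_subset_T hMadd h0M hIM
  have key : ∀ g ∈ Hinf d I, ∫ x in Box d, g x * Real.cos (ip d x m) = 0 :=
    fun g hg => int_T_cos hMneg hmM (hsub hg)
  refine ⟨fun g hg => key g hg, ?_⟩
  intro hdense
  have hm0 : m ≠ 0 := fun h => hmM (h ▸ h0M)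
  have hmm0 : m + m ≠ 0 := by
    intro h
    apply hm0
    funext j
    have := congrFun h j
    simp only [Pi.add_apply, Pi.zero_apply] at this ⊢
    omega
  have contf : Continuous (fun x => Real.cos (ip d x m)) :=
    Real.continuous_cos.comp (continuous_ip d m)
  have perf : Periodic2pi d (fun x => Real.cos (ip d x m)) := by
    intro x k
    have h1 : ip d (x + fun j => 2 * Real.pi * (k j : ℝ)) m
        = ip d x m + (∑ j, k j * m j : ℤ) * (2 * Real.pi) := by
      simp only [ip, Pi.add_apply]
      push_cast
      rw [Finset.sum_mul, ← Finset.sum_add_distrib]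
      apply Finset.sum_congr rfl; intros; ring
    beta_reduce
    rw [h1, Real.cos_add_int_mul_two_pi]
  obtain ⟨g, hg, hlt⟩ := hdense _ contf perf (1/4) (by norm_num)
  have h0le : (0 : Fin d → ℝ) ≤ fun _ => 2 * Real.pi := fun j => by positivity
  have vol : (volume (Box d)).toReal = (2 * Real.pi) ^ d := by
    unfold Box
    rw [Real.volume_Icc_pi_toReal h0le]
    simp [Finset.prod_const, Finset.card_univ]
  have hfint : IntegrableOn (fun x => Real.cos (ip d x m) * Real.cos (ip d x m))
      (Box d) volume := integrableOn_box (contf.mul contf)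
  have hgint : IntegrableOn (fun x => g x * Real.cos (ip d x m)) (Box d) volume :=
    integrableOn_box ((cont_of_mem_T (hsub hg)).mul contf)
  have hff : ∫ x in Box d, Real.cos (ip d x m) * Real.cos (ip d x m)
      = (2 * Real.pi) ^ d / 2 := by
    rw [MeasureTheory.setIntegral_congr_fun (show MeasurableSet (Box d) from measurableSet_Icc)
      (show Set.EqOn (fun x => Real.cos (ip d x m) * Real.cos (ip d x m))
        (fun x => 1/2 + 1/2 * Real.cos (ip d x (m + m))) (Box d) from fun x _ => by
          simp only [ip_add, Real.cos_add]
          linear_combination (1/2) * Real.sin_sq_add_cos_sq (ip d x m))]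
    rw [MeasureTheory.integral_add
      (integrableOn_box (f := fun _ : Fin d → ℝ => (1/2 : ℝ)) continuous_const)
      (integrableOn_box (f := fun x => 1/2 * Real.cos (ip d x (m + m)))
        (continuous_const.mul (Real.continuous_cos.comp (continuous_ip d (m + m)))))]
    rw [MeasureTheory.integral_const_mul, int_box_cos_zero hmm0,
      MeasureTheory.setIntegral_const, MeasureTheory.measureReal_def, vol]
    simp
    ring
  have hzero : ∫ x in Box d, g x * Real.cos (ip d x m) = 0 := key g hg
  have hval : ∫ x in Box d,
      (Real.cos (ip d x m) * Real.cos (ip d x m) - g x * Real.cos (ip d x m))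
      = (2 * Real.pi) ^ d / 2 := by
    rw [MeasureTheory.integral_sub hfint hgint, hff, hzero, sub_zero]
  have hb : ‖∫ x in Box d,
      (Real.cos (ip d x m) * Real.cos (ip d x m) - g x * Real.cos (ip d x m))‖
      ≤ 1/4 * (volume (Box d)).toReal := by
    apply MeasureTheory.norm_setIntegral_le_of_norm_le_const_ae'
      (IsCompact.measure_lt_top isCompact_Icc)
    apply Filter.Eventually.of_forall
    intro x hx
    have : Real.cos (ip d x m) * Real.cos (ip d x m) - g x * Real.cos (ip d x m)
        = (Real.cos (ip d x m) - g x) * Real.cos (ip d x m) := by ring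
    rw [this, Real.norm_eq_abs, abs_mul]
    calc |Real.cos (ip d x m) - g x| * |Real.cos (ip d x m)|
        ≤ (1/4) * 1 := by
          apply mul_le_mul (le_of_lt (hlt x)) (Real.abs_cos_le_one _) (abs_nonneg _)
          norm_num
      _ = 1/4 := by norm_num
  rw [hval, vol, Real.norm_eq_abs, abs_of_pos (by positivity)] at hb
  have hpos : (0:ℝ) < (2 * Real.pi) ^ d := by positivity
  linarith
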